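/- arXiv:1308.0676 — 2 statements merged into one kernel-verified Lean document; each statement's English description precedes it below -/
import Mathlib

section
/- Let N be a von Neumann algebra with a faithful normal tracial state τ, let A be a von Neumann subalgebra of N, and let n ≥ 1. If N ⊖ A equals the SOT-closure of the linear span of its unitary elements, i.e. N ⊖ A = span{u : u ∈ U(N ⊖ A)}^‾(SOT), then the same holds one matrix level up: the set Mₙ(N ⊖ A) of all n×n matrices with every entry in N ⊖ A equals the closure, in the strong operator topology of Mₙ(N) ⊆ B(Hⁿ), of the linear span of the set of unitary elements of Mₙ(N) all of whose entries lie in N ⊖ A; that is, Mₙ(N ⊖ A) = span{u : u ∈ U(Mₙ(N ⊖ A))}^‾(SOT). -/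
open scoped ComplexOrder

/-- The closure of a set of bounded operators in the strong operator topology, i.e. the
topology of pointwise convergence on `H`. -/
def sotClosure {H : Type*} [NormedAddCommGroup H] [InnerProductSpace ℂ H]
    (S : Set (H →L[ℂ] H)) : Set (H →L[ℂ] H) :=
  {x | (⇑x : H → H) ∈ closure ((fun T : H →L[ℂ] H => (⇑T : H → H)) '' S)}

/-- The weak operator topology on the bounded operators on `H`: the topology induced by the
functionals `T ↦ ⟪T u, v⟫`. -/
noncomputable def wotTopology (H : Type*) [NormedAddCommGroup H] [InnerProductSpace ℂ H] :
    TopologicalSpace (H →L[ℂ] H) :=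
  TopologicalSpace.induced
    (fun T : H →L[ℂ] H => fun u v : H => (inner ℂ (T u) v : ℂ)) inferInstance

variable {H : Type*} [NormedAddCommGroup H] [InnerProductSpace ℂ H] [CompleteSpace H]

/-- `τ` is a faithful normal tracial state on the von Neumann algebra `N`: it is linear on `N`,
unital, tracial, positive and faithful on `N`, and WOT-continuous on the closed unit ball
of `N`. -/
structure IsFaithfulNormalTracialState (N : VonNeumannAlgebra H)
    (τ : (H →L[ℂ] H) → ℂ) : Prop where
  map_add : ∀ x ∈ N, ∀ y ∈ N, τ (x + y) = τ x + τ y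
  map_smul : ∀ x ∈ N, ∀ c : ℂ, τ (c • x) = c * τ x
  map_one : τ 1 = 1
  tracial : ∀ x ∈ N, ∀ y ∈ N, τ (x * y) = τ (y * x)
  nonneg : ∀ x ∈ N, 0 ≤ τ (star x * x)
  faithful : ∀ x ∈ N, τ (star x * x) = 0 → x = 0
  normal : @ContinuousOn _ _ (wotTopology H) _ τ {x : H →L[ℂ] H | x ∈ N ∧ ‖x‖ ≤ 1}

/-- `N` is a factor of type II₁: it is infinite dimensional as a complex vector space and has
trivial center (it carries a faithful normal tracial state, which is supplied separately). -/
structure IsTypeII1Factor (N : VonNeumannAlgebra H) : Prop where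
  infinite_dimensional :
    ¬ ∃ s : Finset (H →L[ℂ] H), ∀ x ∈ N, x ∈ Submodule.span ℂ (s : Set (H →L[ℂ] H))
  center_trivial : ∀ x ∈ N, (∀ y ∈ N, x * y = y * x) → ∃ c : ℂ, x = c • (1 : H →L[ℂ] H)

/-- The orthogonal complement `N ⊖ A = {x ∈ N : τ(a⋆ x) = 0 for all a ∈ A}`. -/
def ominus (N : VonNeumannAlgebra H) (A : Set (H →L[ℂ] H)) (τ : (H →L[ℂ] H) → ℂ) :
    Set (H →L[ℂ] H) :=
  {x | x ∈ N ∧ ∀ a ∈ A, τ (star a * x) = 0}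

/-- The strong-operator-topology closure of a set of `n × n` matrices of bounded operators,
for the strong operator topology of `Mₙ(B(H)) = B(Hⁿ)` (equivalently, entrywise pointwise
convergence on `H`). -/
def sotClosureMatrix {H : Type*} [NormedAddCommGroup H] [InnerProductSpace ℂ H] {n : ℕ}
    (S : Set (Matrix (Fin n) (Fin n) (H →L[ℂ] H))) :
    Set (Matrix (Fin n) (Fin n) (H →L[ℂ] H)) :=
  {x | (fun i j => (⇑(x i j) : H → H)) ∈
      closure ((fun T : Matrix (Fin n) (Fin n) (H →L[ℂ] H) =>
        fun i j => (⇑(T i j) : H → H)) '' S)}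

section Aux

variable {H : Type*} [NormedAddCommGroup H] [InnerProductSpace ℂ H] [CompleteSpace H]

/-- `N ⊖ A` as a `ℂ`-submodule of `B(H)`. -/
def ominusSubmodule (N : VonNeumannAlgebra H) (A : Set (H →L[ℂ] H)) (τ : (H →L[ℂ] H) → ℂ)
    (hτ : IsFaithfulNormalTracialState N τ) (hAN : A ⊆ (N : Set (H →L[ℂ] H))) :
    Submodule ℂ (H →L[ℂ] H) where
  carrier := ominus N A τ
  zero_mem' := by
    refine ⟨zero_mem N, fun a ha => ?_⟩
    have h := hτ.map_smul 0 (zero_mem N) 0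
    simp only [smul_zero, zero_mul] at h
    simpa [h] using h
  add_mem' := by
    rintro x y ⟨hxN, hx⟩ ⟨hyN, hy⟩
    refine ⟨add_mem hxN hyN, fun a ha => ?_⟩
    have hsa : star a ∈ N := star_mem (hAN ha)
    rw [mul_add, hτ.map_add _ (mul_mem hsa hxN) _ (mul_mem hsa hyN), hx a ha, hy a ha, add_zero]
  smul_mem' := by
    rintro c x ⟨hxN, hx⟩
    refine ⟨N.toStarSubalgebra.smul_mem hxN c, fun a ha => ?_⟩
    have hsa : star a ∈ N := star_mem (hAN ha)
    rw [mul_smul_comm, hτ.map_smul _ (mul_mem hsa hxN) c, hx a ha, mul_zero]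

/-- A "permuted diagonal" matrix of unitaries is unitary. -/
lemma perm_diag_unitary {n : ℕ} (d : Fin n → (H →L[ℂ] H))
    (hd : ∀ k, d k ∈ unitary (H →L[ℂ] H)) (σ : Equiv.Perm (Fin n)) :
    (Matrix.of fun k l => if l = σ k then d k else 0) ∈
      unitary (Matrix (Fin n) (Fin n) (H →L[ℂ] H)) := by
  rw [Unitary.mem_iff]
  constructor
  · refine Matrix.ext fun k l => ?_
    simp only [Matrix.mul_apply, Matrix.conjTranspose_apply, Matrix.of_apply, Matrix.one_apply]
    rw [Finset.sum_eq_single (σ.symm k)]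
    · rcases eq_or_ne k l with h | h
      · subst h
        simp [Equiv.apply_symm_apply, ((Unitary.mem_iff).1 (hd (σ.symm k))).1]
      · simp [Equiv.apply_symm_apply, Ne.symm h, h]
    · intro m _ hm
      have : ¬ k = σ m := by
        intro hc
        exact hm (by rw [hc, Equiv.symm_apply_apply])
      simp [this]
    · simp
  · refine Matrix.ext fun k l => ?_
    simp only [Matrix.mul_apply, Matrix.conjTranspose_apply, Matrix.of_apply, Matrix.one_apply]
    rw [Finset.sum_eq_single (σ k)]
    · rcases eq_or_ne k l with h | h
      · subst h
        simp [((Unitary.mem_iff).1 (hd k)).2]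
      · have : ¬ σ k = σ l := fun hc => h (σ.injective hc)
        simp [this, h]
    · intro m _ hm
      simp [hm]
    · simp

/-- A standard-basis matrix at a unitary element of `S` lies in the span of the unitary
matrices all of whose entries lie in `S`. -/
lemma stdBasisMatrix_mem_span {n : ℕ} (S : Set (H →L[ℂ] H))
    (hS0 : (0 : H →L[ℂ] H) ∈ S) (hSneg : ∀ x ∈ S, -x ∈ S)
    (i j : Fin n) (u : H →L[ℂ] H) (hu : u ∈ S) (huU : u ∈ unitary (H →L[ℂ] H)) :
    Matrix.single i j u ∈ Submodule.span ℂ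
      {w : Matrix (Fin n) (Fin n) (H →L[ℂ] H) |
        (∀ k l, w k l ∈ S) ∧ w ∈ unitary (Matrix (Fin n) (Fin n) (H →L[ℂ] H))} := by
  classical
  set σ : Equiv.Perm (Fin n) := Equiv.swap i j with hσ
  have hσi : σ i = j := Equiv.swap_apply_left i j
  set V : Matrix (Fin n) (Fin n) (H →L[ℂ] H) :=
    Matrix.of fun k l => if l = σ k then u else 0 with hV
  set W : Matrix (Fin n) (Fin n) (H →L[ℂ] H) :=
    Matrix.of fun k l => if l = σ k then (if k = i then u else -u) else 0 with hW
  have hVU : V ∈ unitary (Matrix (Fin n) (Fin n) (H →L[ℂ] H)) :=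
    perm_diag_unitary (fun _ => u) (fun _ => huU) σ
  have hnegU : -u ∈ unitary (H →L[ℂ] H) := by
    rw [Unitary.mem_iff] at huU ⊢
    simpa using huU
  have hWU : W ∈ unitary (Matrix (Fin n) (Fin n) (H →L[ℂ] H)) := by
    exact perm_diag_unitary (fun k => if k = i then u else -u)
      (fun k => by split <;> [exact huU; exact hnegU]) σ
  have hVmem : V ∈ {w : Matrix (Fin n) (Fin n) (H →L[ℂ] H) |
      (∀ k l, w k l ∈ S) ∧ w ∈ unitary (Matrix (Fin n) (Fin n) (H →L[ℂ] H))} := by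
    refine ⟨fun k l => ?_, hVU⟩
    simp only [hV, Matrix.of_apply]
    split <;> [exact hu; exact hS0]
  have hWmem : W ∈ {w : Matrix (Fin n) (Fin n) (H →L[ℂ] H) |
      (∀ k l, w k l ∈ S) ∧ w ∈ unitary (Matrix (Fin n) (Fin n) (H →L[ℂ] H))} := by
    refine ⟨fun k l => ?_, hWU⟩
    simp only [hW, Matrix.of_apply]
    split
    · split <;> [exact hu; exact hSneg u hu]
    · exact hS0
  have hkey : Matrix.single i j u = (1/2 : ℂ) • V + (1/2 : ℂ) • W := by
    refine Matrix.ext fun k l => ?_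
    simp only [Matrix.add_apply, Matrix.smul_apply, Matrix.single, Matrix.of_apply,
      hV, hW]
    split_ifs with h1 h2 h3 h4 h5
    · rw [← add_smul]; norm_num
    · exact absurd h1.1.symm h3
    · exact absurd (by rw [← h1.1, hσi]; exact h1.2.symm) h2
    · refine absurd ⟨h5.symm, ?_⟩ h1
      rw [h5, hσi] at h4
      exact h4.symm
    · rw [smul_neg, add_neg_cancel]
    · simp
  rw [hkey]
  exact Submodule.add_mem _
    (Submodule.smul_mem _ _ (Submodule.subset_span hVmem))
    (Submodule.smul_mem _ _ (Submodule.subset_span hWmem))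

/-- A matrix all of whose entries lie in the span of the unitaries of `S` lies in the span of
the unitary matrices all of whose entries lie in `S`. -/
lemma matrix_mem_span_of_entries_mem_span {n : ℕ} (S : Set (H →L[ℂ] H))
    (hS0 : (0 : H →L[ℂ] H) ∈ S) (hSneg : ∀ x ∈ S, -x ∈ S)
    (x : Matrix (Fin n) (Fin n) (H →L[ℂ] H))
    (hx : ∀ i j, x i j ∈ Submodule.span ℂ {u : H →L[ℂ] H | u ∈ S ∧ u ∈ unitary (H →L[ℂ] H)}) :
    x ∈ Submodule.span ℂ
      {w : Matrix (Fin n) (Fin n) (H →L[ℂ] H) |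
        (∀ k l, w k l ∈ S) ∧ w ∈ unitary (Matrix (Fin n) (Fin n) (H →L[ℂ] H))} := by
  classical
  rw [Matrix.matrix_eq_sum_single x]
  refine Submodule.sum_mem _ fun i _ => Submodule.sum_mem _ fun j _ => ?_
  refine Submodule.span_induction (p := fun b _ => Matrix.single i j b ∈
      Submodule.span ℂ {w : Matrix (Fin n) (Fin n) (H →L[ℂ] H) |
        (∀ k l, w k l ∈ S) ∧ w ∈ unitary (Matrix (Fin n) (Fin n) (H →L[ℂ] H))})
    (fun b hb => stdBasisMatrix_mem_span S hS0 hSneg i j b hb.1 hb.2)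
    (by simp)
    (fun b c _ _ hb hc => by rw [Matrix.single_add]; exact Submodule.add_mem _ hb hc)
    (fun r b _ hb => by rw [← Matrix.smul_single]; exact Submodule.smul_mem _ _ hb)
    (hx i j)

/-- The entry map on matrices, as a linear map. -/
def entryLM {n : ℕ} (i j : Fin n) :
    Matrix (Fin n) (Fin n) (H →L[ℂ] H) →ₗ[ℂ] (H →L[ℂ] H) where
  toFun M := M i j
  map_add' _ _ := rfl
  map_smul' _ _ := rfl

end Aux

/-- Let `N` be a von Neumann algebra with faithful normal tracial state `τ`
and `A ⊆ N` a von Neumann subalgebra.  If `N ⊖ A` equals the SOT-closure of the span of its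
unitaries, then `Mₙ(N ⊖ A)` equals the SOT-closure of the span of the unitaries of `Mₙ(N)`
all of whose entries lie in `N ⊖ A`. -/
theorem matrix_ominus_eq_sotClosure_span_unitary
    [TopologicalSpace.SeparableSpace H]
    (N : VonNeumannAlgebra H) (τ : (H →L[ℂ] H) → ℂ)
    (hτ : IsFaithfulNormalTracialState N τ)
    (A : VonNeumannAlgebra H) (hAN : (A : Set (H →L[ℂ] H)) ⊆ (N : Set (H →L[ℂ] H)))
    (n : ℕ) (hn : 1 ≤ n)
    (hbase : ominus N (↑A) τ =
      sotClosure (↑(Submodule.span ℂ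
        {u : H →L[ℂ] H | u ∈ ominus N (↑A) τ ∧ u ∈ unitary (H →L[ℂ] H)}))) :
    {x : Matrix (Fin n) (Fin n) (H →L[ℂ] H) | ∀ i j, x i j ∈ ominus N (↑A) τ} =
      sotClosureMatrix (↑(Submodule.span ℂ
        {u : Matrix (Fin n) (Fin n) (H →L[ℂ] H) |
          (∀ i j, u i j ∈ ominus N (↑A) τ) ∧
            u ∈ unitary (Matrix (Fin n) (Fin n) (H →L[ℂ] H))})) := by
    classical
  set BU : Set (H →L[ℂ] H) :=
    {u : H →L[ℂ] H | u ∈ ominus N (↑A) τ ∧ u ∈ unitary (H →L[ℂ] H)} with hBUdef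
  set MU : Set (Matrix (Fin n) (Fin n) (H →L[ℂ] H)) :=
    {u | (∀ i j, u i j ∈ ominus N (↑A) τ) ∧
      u ∈ unitary (Matrix (Fin n) (Fin n) (H →L[ℂ] H))} with hMUdef
  set Om : Submodule ℂ (H →L[ℂ] H) := ominusSubmodule N (↑A) τ hτ hAN with hOmdef
  have hS0 : (0 : H →L[ℂ] H) ∈ ominus N (↑A) τ := Om.zero_mem
  have hSneg : ∀ x ∈ ominus N (↑A) τ, -x ∈ ominus N (↑A) τ := fun x hx => Om.neg_mem hx
  ext x
  simp only [Set.mem_setOf_eq, sotClosureMatrix]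
  constructor
  · intro hx
    show (fun i j => ⇑(x i j)) ∈ closure _
    have hpi : closure (Set.pi Set.univ fun _ : Fin n => Set.pi Set.univ fun _ : Fin n =>
        (fun T : H →L[ℂ] H => (⇑T : H → H)) '' ↑(Submodule.span ℂ BU))
        = Set.pi Set.univ fun _ : Fin n => Set.pi Set.univ fun _ : Fin n =>
          closure ((fun T : H →L[ℂ] H => (⇑T : H → H)) '' ↑(Submodule.span ℂ BU)) := by
      simp only [closure_pi_set]
    have hmem : (fun i j => ⇑(x i j)) ∈ Set.pi Set.univ fun _ : Fin n => Set.pi Set.univ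
        fun _ : Fin n =>
          closure ((fun T : H →L[ℂ] H => (⇑T : H → H)) '' ↑(Submodule.span ℂ BU)) := by
      intro i _
      intro j _
      have hxe := hx i j
      rw [hbase] at hxe
      exact hxe
    rw [← hpi] at hmem
    refine closure_mono ?_ hmem
    rintro f hf
    have hf' : ∀ i j, f i j ∈ (fun T : H →L[ℂ] H => (⇑T : H → H)) '' ↑(Submodule.span ℂ BU) :=
      fun i j => hf i (Set.mem_univ i) j (Set.mem_univ j)
    choose y hy hyf using hf'
    refine ⟨Matrix.of y, ?_, ?_⟩
    · exact matrix_mem_span_of_entries_mem_span _ hS0 hSneg _ (fun i j => hy i j)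
    · funext i j
      exact hyf i j
  · intro hx i j
    have hcont : Continuous (fun f : Fin n → Fin n → H → H => f i j) :=
      (continuous_apply j).comp (continuous_apply i)
    have h1 : ⇑(x i j) ∈ closure ((fun f : Fin n → Fin n → H → H => f i j) ''
        ((fun T : Matrix (Fin n) (Fin n) (H →L[ℂ] H) => fun i j => (⇑(T i j) : H → H)) ''
          ↑(Submodule.span ℂ MU))) :=
      image_closure_subset_closure_image hcont ⟨_, hx, rfl⟩
    have h2 : ((fun f : Fin n → Fin n → H → H => f i j) ''
        ((fun T : Matrix (Fin n) (Fin n) (H →L[ℂ] H) => fun i j => (⇑(T i j) : H → H)) ''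
          ↑(Submodule.span ℂ MU))) ⊆
        (fun T : H →L[ℂ] H => (⇑T : H → H)) '' (ominus N (↑A) τ) := by
      rintro _ ⟨_, ⟨T, hT, rfl⟩, rfl⟩
      refine ⟨T i j, ?_, rfl⟩
      have hle : Submodule.span ℂ MU ≤ Submodule.comap (entryLM i j) Om := by
        rw [Submodule.span_le]
        intro w hw
        exact hw.1 i j
      exact hle hT
    have h3 : (fun T : H →L[ℂ] H => (⇑T : H → H)) '' (ominus N (↑A) τ) ⊆
        closure ((fun T : H →L[ℂ] H => (⇑T : H → H)) '' ↑(Submodule.span ℂ BU)) := by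
      rintro _ ⟨T, hT, rfl⟩
      rw [hbase] at hT
      exact hT
    have h4 := closure_mono h3 (closure_mono h2 h1)
    rw [closure_closure] at h4
    rw [hbase]
    exact h4
end

section
/- Let M be a unital C*-algebra, let x₁, x₂ ∈ M be self-adjoint with ‖x₁‖ ≤ 1 and ‖x₂‖ ≤ 1, and write a = √(1−x₁²), b = √(1−x₂²) for the positive square roots given by continuous functional calculus. Then the 4×4 matrices ũ₁ = [[x₁, 0, a, 0], [0, x₂, 0, b], [0, −b, 0, x₂], [−a, 0, x₁, 0]] and ũ₂ = [[x₁, 0, a, 0], [0, x₂, 0, b], [0, b, 0, −x₂], [a, 0, −x₁, 0]] are unitary elements of M₄(M), and diag(x₁, x₂, 0, 0) = ½ũ₁ + ½ũ₂ − ũ₃, where ũ₃ is the 4×4 matrix whose (1,3) entry is a, whose (2,4) entry is b, and whose other entries are 0. -/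
open CFC in
lemma sqrt_aux_of_contraction (M : Type*) [CStarAlgebra M] [PartialOrder M] [StarOrderedRing M]
    (x : M) (hsa : IsSelfAdjoint x) (hx : ‖x‖ ≤ 1) :
    IsSelfAdjoint (CFC.sqrt (1 - x * x)) ∧
      CFC.sqrt (1 - x * x) * CFC.sqrt (1 - x * x) = 1 - x * x ∧
      Commute x (CFC.sqrt (1 - x * x)) := by
  have h1 : (0 : M) ≤ x * x := by simpa [hsa.star_eq] using star_mul_self_nonneg x
  have hnorm : ‖x * x‖ ≤ 1 := by
    calc ‖x * x‖ = ‖star x * x‖ := by rw [hsa.star_eq]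
    _ = ‖x‖ * ‖x‖ := CStarRing.norm_star_mul_self
    _ ≤ 1 := by nlinarith [norm_nonneg x]
  have h2 : x * x ≤ 1 := (CStarAlgebra.norm_le_one_iff_of_nonneg _ h1).mp hnorm
  have hy : (0 : M) ≤ 1 - x * x := sub_nonneg.2 h2
  refine ⟨.of_nonneg (CFC.sqrt_nonneg _), CFC.sqrt_mul_sqrt_self _ hy, ?_⟩
  have hfx : (1 : M) - x * x = cfc (fun t : ℝ => 1 - t * t) x := by
    have := cfc_polynomial (R := ℝ) (1 - Polynomial.X * Polynomial.X) x hsa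
    simpa using this.symm
  have hg : Continuous (fun t : ℝ => ((Real.toNNReal t).sqrt : ℝ)) :=
    NNReal.continuous_coe.comp (NNReal.continuous_sqrt.comp continuous_real_toNNReal)
  rw [CFC.sqrt_eq_cfc, cfc_nnreal_eq_real NNReal.sqrt _ hy, hfx,
    ← cfc_comp' _ _ x hg.continuousOn]
  nth_rewrite 1 [← cfc_id' ℝ x hsa]
  exact cfc_commute_cfc _ _ x


set_option maxHeartbeats 2000000 in
/-- Let `M` be a unital C⋆-algebra, `x₁, x₂ ∈ M` self-adjoint contractions,
and `a = √(1 - x₁²)`, `b = √(1 - x₂²)` the positive square roots given by continuous functional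
calculus.  Then `ũ₁ = [[x₁,0,a,0],[0,x₂,0,b],[0,-b,0,x₂],[-a,0,x₁,0]]` and
`ũ₂ = [[x₁,0,a,0],[0,x₂,0,b],[0,b,0,-x₂],[a,0,-x₁,0]]` are unitary in `M₄(M)`, and
`diag(x₁,x₂,0,0) = ½ũ₁ + ½ũ₂ - ũ₃`, where `ũ₃` has `(1,3)` entry `a`, `(2,4)` entry `b` and
all other entries `0`. -/
theorem unitary_decomposition_four_by_four
    (M : Type*) [CStarAlgebra M] [PartialOrder M] [StarOrderedRing M]
    (x₁ x₂ : M) (hsa₁ : IsSelfAdjoint x₁) (hsa₂ : IsSelfAdjoint x₂)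
    (hx₁ : ‖x₁‖ ≤ 1) (hx₂ : ‖x₂‖ ≤ 1) :
    (!![x₁, 0, CFC.sqrt (1 - x₁ * x₁), 0;
        0, x₂, 0, CFC.sqrt (1 - x₂ * x₂);
        0, -CFC.sqrt (1 - x₂ * x₂), 0, x₂;
        -CFC.sqrt (1 - x₁ * x₁), 0, x₁, 0] ∈
        unitary (Matrix (Fin 4) (Fin 4) M)) ∧
    (!![x₁, 0, CFC.sqrt (1 - x₁ * x₁), 0;
        0, x₂, 0, CFC.sqrt (1 - x₂ * x₂);
        0, CFC.sqrt (1 - x₂ * x₂), 0, -x₂;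
        CFC.sqrt (1 - x₁ * x₁), 0, -x₁, 0] ∈
        unitary (Matrix (Fin 4) (Fin 4) M)) ∧
    (!![x₁, 0, 0, 0;
        0, x₂, 0, 0;
        0, 0, 0, 0;
        0, 0, 0, 0] =
      (1 / 2 : ℂ) • !![x₁, 0, CFC.sqrt (1 - x₁ * x₁), 0;
          0, x₂, 0, CFC.sqrt (1 - x₂ * x₂);
          0, -CFC.sqrt (1 - x₂ * x₂), 0, x₂;
          -CFC.sqrt (1 - x₁ * x₁), 0, x₁, 0] +
      (1 / 2 : ℂ) • !![x₁, 0, CFC.sqrt (1 - x₁ * x₁), 0;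
          0, x₂, 0, CFC.sqrt (1 - x₂ * x₂);
          0, CFC.sqrt (1 - x₂ * x₂), 0, -x₂;
          CFC.sqrt (1 - x₁ * x₁), 0, -x₁, 0] -
      !![0, 0, CFC.sqrt (1 - x₁ * x₁), 0;
         0, 0, 0, CFC.sqrt (1 - x₂ * x₂);
         0, 0, 0, 0;
         0, 0, 0, 0]) := by
  obtain ⟨ha1, ha2, ha3⟩ := sqrt_aux_of_contraction M x₁ hsa₁ hx₁
  obtain ⟨hb1, hb2, hb3⟩ := sqrt_aux_of_contraction M x₂ hsa₂ hx₂
  set a := CFC.sqrt (1 - x₁ * x₁) with hadef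
  set b := CFC.sqrt (1 - x₂ * x₂) with hbdef
  refine ⟨?_, ?_, ?_⟩
  · rw [Unitary.mem_iff]
    constructor <;>
    · ext i j
      fin_cases i <;> fin_cases j <;>
        simp [Matrix.mul_apply, Fin.sum_univ_four, Matrix.one_apply, Matrix.star_apply,
          hsa₁.star_eq, hsa₂.star_eq, ha1.star_eq, hb1.star_eq, ha2, hb2, ha3.eq, hb3.eq]
  · rw [Unitary.mem_iff]
    constructor <;>
    · ext i j
      fin_cases i <;> fin_cases j <;>
        simp [Matrix.mul_apply, Fin.sum_univ_four, Matrix.one_apply, Matrix.star_apply,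
          hsa₁.star_eq, hsa₂.star_eq, ha1.star_eq, hb1.star_eq, ha2, hb2, ha3.eq, hb3.eq]
  · ext i j
    fin_cases i <;> fin_cases j <;>
      simp [Matrix.smul_apply, Matrix.add_apply, Matrix.sub_apply,
        Matrix.vecHead, Matrix.vecTail] <;> module
end
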